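/- arXiv:2512.06704 — 5 statements merged into one kernel-verified Lean document; each statement's English description precedes it below -/
import Mathlib

section
/- The master-formula λ-bracket is sesquilinear: for all f, g ∈ A, all α ∈ {1,…,D} and all T ∈ ℤ^D, its coefficients satisfy B_T(S_α f, g) = B_{T+E_α}(f, g) and B_T(f, S_α g) = S_α(B_{T−E_α}(f, g)); equivalently, {S_α f _λ g} = λ_α^{−1}{f_λ g} and {f_λ S_α g} = λ_α·S_α({f_λ g}). -/
open MvPolynomial

namespace MPVA

/-- The algebra of difference polynomials in `ℓ` generators on a `D`-dimensional lattice: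
polynomials over `ℂ` in the variables `u^i_N`, `i ∈ Fin ℓ`, `N ∈ ℤ^D`. -/
abbrev A (ℓ D : ℕ) := MvPolynomial (Fin ℓ × (Fin D → ℤ)) ℂ

variable {ℓ D : ℕ}

/-- The shift automorphism `S^M` sending `u^i_N` to `u^i_{N+M}`. -/
noncomputable def Sh (M : Fin D → ℤ) : A ℓ D ≃ₐ[ℂ] A ℓ D :=
  renameEquiv ℂ ((Equiv.refl (Fin ℓ)).prodCongr (Equiv.addRight M))

/-- The `α`-th standard basis vector `E_α ∈ ℤ^D`. -/
def E (α : Fin D) : Fin D → ℤ := fun β => if β = α then 1 else 0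

/-- Coefficient `B_T(f,g)` of `λ^T` in the master-formula λ-bracket `{f_λ g}` determined
by the generator coefficients `{u^i_λ u^j} = Σ_T (P j i T)·λ^T`:
`{f_λ g} = Σ_{i,j,M,N,T'} (∂g/∂u^j_N)·S^N(P^{ji}_{T'})·S^{N+T'−M}(∂f/∂u^i_M)·λ^{N+T'−M}`. -/
noncomputable def B (P : Fin ℓ → Fin ℓ → (Fin D → ℤ) → A ℓ D)
    (T : Fin D → ℤ) (f g : A ℓ D) : A ℓ D :=
  ∑ᶠ (i : Fin ℓ) (j : Fin ℓ) (M : Fin D → ℤ) (N : Fin D → ℤ),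
    (pderiv (j, N) g) * (Sh N (P j i (T - N + M))) * (Sh T (pderiv (i, M) f))

/-- The family of generator coefficients has only finitely many nonzero members. -/
def FinSupp (P : Fin ℓ → Fin ℓ → (Fin D → ℤ) → A ℓ D) : Prop :=
  {x : (Fin ℓ × Fin ℓ) × (Fin D → ℤ) | P x.1.1 x.1.2 x.2 ≠ 0}.Finite

/-- The PVA-Jacobi identity for the triple `(f,g,h)`, written coefficient-wise
(for all `T, U ∈ ℤ^D`, the coefficient of `λ^T μ^U` in
`Σ_U {f_λ B_U(g,h)}μ^U − Σ_T {g_μ B_T(f,h)}λ^T = Σ_{T,U} B_U(B_T(f,g),h)λ^{T+U}μ^U`). -/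
def Jacobi (P : Fin ℓ → Fin ℓ → (Fin D → ℤ) → A ℓ D) (f g h : A ℓ D) : Prop :=
  ∀ T U : Fin D → ℤ,
    B P T f (B P U g h) - B P U g (B P T f h) = B P U (B P (T - U) f g) h

lemma Sh_Sh (U V : Fin D → ℤ) (p : A ℓ D) : Sh U (Sh V p) = Sh (V + U) p := by
  simp only [Sh, renameEquiv_apply, rename_rename]
  have h : (⇑((Equiv.refl (Fin ℓ)).prodCongr (Equiv.addRight U)) ∘
      ⇑((Equiv.refl (Fin ℓ)).prodCongr (Equiv.addRight V))) =
      ⇑((Equiv.refl (Fin ℓ)).prodCongr (Equiv.addRight (V + U))) := by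
    funext x
    simp [Prod.map, add_assoc]
  rw [h]

lemma pderiv_Sh (U : Fin D → ℤ) (i : Fin ℓ) (M : Fin D → ℤ) (p : A ℓ D) :
    pderiv (i, M) (Sh U p) = Sh U (pderiv (i, M - U) p) := by
  have := pderiv_rename
    (f := ⇑((Equiv.refl (Fin ℓ)).prodCongr (Equiv.addRight U))) (Equiv.injective _)
    (i, M - U) p
  simpa [Sh, sub_add_cancel] using this

lemma Sh_finsum {ι : Sort*} (U : Fin D → ℤ) (h : ι → A ℓ D) :
    Sh U (∑ᶠ x, h x) = ∑ᶠ x, Sh U (h x) :=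
  AddEquiv.map_finsum (Sh U).toRingEquiv.toAddEquiv h

/-- sesquilinearity of the master-formula λ-bracket:
`B_T(S_α f, g) = B_{T+E_α}(f,g)` and `B_T(f, S_α g) = S_α(B_{T−E_α}(f,g))`. -/
theorem master_sesquilinear (ℓ D : ℕ) (P : Fin ℓ → Fin ℓ → (Fin D → ℤ) → A ℓ D)
    (hP : FinSupp P) (f g : A ℓ D) (α : Fin D) (T : Fin D → ℤ) :
    B P T (Sh (E α) f) g = B P (T + E α) f g ∧
    B P T f (Sh (E α) g) = Sh (E α) (B P (T - E α) f g) := by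
  constructor
  · unfold B
    refine finsum_congr fun i => finsum_congr fun j => ?_
    conv_rhs => rw [← finsum_comp_equiv (Equiv.subRight (E α))]
    refine finsum_congr fun M => finsum_congr fun N => ?_
    simp only [Equiv.subRight_apply]
    rw [pderiv_Sh, Sh_Sh]
    have h1 : T - N + M = T + E α - N + (M - E α) := by abel
    have h2 : E α + T = T + E α := add_comm _ _
    rw [h1, h2]
  · unfold B
    simp only [Sh_finsum]
    refine finsum_congr fun i => finsum_congr fun j => finsum_congr fun M => ?_
    conv_rhs => rw [← finsum_comp_equiv (Equiv.subRight (E α))]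
    refine finsum_congr fun N => ?_
    simp only [Equiv.subRight_apply]
    rw [pderiv_Sh, map_mul, map_mul, Sh_Sh, Sh_Sh]
    have h1 : N - E α + E α = N := sub_add_cancel _ _
    have h2 : T - E α + E α = T := sub_add_cancel _ _
    have h3 : T - N + M = T - E α - (N - E α) + M := by abel
    rw [h1, h2, h3]

end MPVA
end

section
/- The master-formula λ-bracket satisfies both Leibniz rules: for all f, g, h ∈ A and T ∈ ℤ^D, B_T(f, gh) = B_T(f,g)·h + B_T(f,h)·g (left Leibniz rule), and B_T(fg, h) = B_T(f,h)·S^T(g) + B_T(g,h)·S^T(f) (right Leibniz rule). -/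
open MvPolynomial

namespace MPVA

variable {ℓ D : ℕ}

/-- Auxiliary: the summand of the master formula as a function of the 4-tuple `(i,j,M,N)`. -/
noncomputable def term (P : Fin ℓ → Fin ℓ → (Fin D → ℤ) → A ℓ D) (T : Fin D → ℤ)
    (f g : A ℓ D) (x : Fin ℓ × Fin ℓ × (Fin D → ℤ) × (Fin D → ℤ)) : A ℓ D :=
  (pderiv (x.2.1, x.2.2.2) g) * (Sh x.2.2.2 (P x.2.1 x.1 (T - x.2.2.2 + x.2.2.1))) *
    (Sh T (pderiv (x.1, x.2.2.1) f))

lemma term_support_finite (P : Fin ℓ → Fin ℓ → (Fin D → ℤ) → A ℓ D) (T : Fin D → ℤ)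
    (f g : A ℓ D) : (Function.support (term P T f g)).Finite := by
  have hinj : Function.Injective
      (fun x : Fin ℓ × Fin ℓ × (Fin D → ℤ) × (Fin D → ℤ) =>
        ((x.1, x.2.2.1), (x.2.1, x.2.2.2))) := by
    rintro ⟨a, b, c, d⟩ ⟨a', b', c', d'⟩ hxy
    simp only [Prod.mk.injEq] at hxy
    obtain ⟨⟨h1, h2⟩, h3, h4⟩ := hxy
    simp_all
  refine Set.Finite.subset (((f.vars.finite_toSet.prod g.vars.finite_toSet)).preimage
    hinj.injOn) ?_
  intro x hx
  simp only [Set.mem_preimage, Set.mem_prod, Finset.mem_coe]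
  constructor
  · by_contra hv
    exact hx (by simp [term, pderiv_eq_zero_of_notMem_vars hv])
  · by_contra hv
    exact hx (by simp [term, pderiv_eq_zero_of_notMem_vars hv])

lemma B_eq (P : Fin ℓ → Fin ℓ → (Fin D → ℤ) → A ℓ D) (T : Fin D → ℤ) (f g : A ℓ D) :
    B P T f g = ∑ᶠ x, term P T f g x := by
  rw [finsum_curry _ (term_support_finite P T f g)]
  refine finsum_congr fun i => ?_
  rw [finsum_curry₃ _ ?_]
  · rfl
  · exact ((term_support_finite P T f g).preimage
      (fun x _ y _ hxy => by simpa using hxy : Set.InjOn (fun y => (i, y)) _))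

/-- both Leibniz rules for the master-formula λ-bracket:
`B_T(f,gh) = B_T(f,g)h + B_T(f,h)g` and `B_T(fg,h) = B_T(f,h)S^T(g) + B_T(g,h)S^T(f)`. -/
theorem master_leibniz (ℓ D : ℕ) (P : Fin ℓ → Fin ℓ → (Fin D → ℤ) → A ℓ D)
    (hP : FinSupp P) (f g h : A ℓ D) (T : Fin D → ℤ) :
    B P T f (g * h) = B P T f g * h + B P T f h * g ∧
    B P T (f * g) h = B P T f h * Sh T g + B P T g h * Sh T f := by
  constructor
  · have h1 : ∀ x, term P T f (g * h) x = term P T f g x * h + term P T f h x * g := by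
      intro x; simp only [term, pderiv_mul]; ring
    rw [B_eq, B_eq, B_eq, finsum_congr h1,
      finsum_add_distrib
        ((term_support_finite P T f g).subset (Function.support_mul_subset_left _ _))
        ((term_support_finite P T f h).subset (Function.support_mul_subset_left _ _)),
      ← finsum_mul _ _,
      ← finsum_mul _ _]
  · have h1 : ∀ x, term P T (f * g) h x
        = term P T f h x * Sh T g + term P T g h x * Sh T f := by
      intro x; simp only [term, pderiv_mul, map_add, map_mul]; ring
    rw [B_eq, B_eq, B_eq, finsum_congr h1,
      finsum_add_distrib
        ((term_support_finite P T f h).subset (Function.support_mul_subset_left _ _))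
        ((term_support_finite P T g h).subset (Function.support_mul_subset_left _ _)),
      ← finsum_mul _ _,
      ← finsum_mul _ _]

end MPVA
end

section
/- Let {·_λ·} be a λ-bracket on A which is skewsymmetric and satisfies the PVA-Jacobi identity for all triples of elements of A. For h ∈ A define X_{∫h} : A → A by X_{∫h}(f) := {h, f}. Then: (i) X_{∫h} depends only on the class ∫h ∈ F (if h − h' ∈ (S₁−1)A + ⋯ + (S_D−1)A then {h, f} = {h', f} for all f); (ii) X_{∫h} is a derivation of A commuting with each shift S_α; and (iii) the map ∫h ↦ X_{∫h} is a Lie algebra morphism: X_{{∫f, ∫g}} = X_{∫f}∘X_{∫g} − X_{∫g}∘X_{∫f}. -/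
open MvPolynomial

namespace MPVA

variable {ℓ D : ℕ}

/-- Membership in `(S₁−1)A + ⋯ + (S_D−1)A` (so `∫x = 0` in the space of local
functionals `F = A/((S₁−1)A + ⋯ + (S_D−1)A)`). -/
def InShiftIdeal (x : A ℓ D) : Prop :=
  ∃ h : Fin D → A ℓ D, x = ∑ α : Fin D, (Sh (E α) (h α) - h α)

/-- A λ-bracket on `A`, presented through its coefficients: `{f_λ g} = Σ_T (B T f g)·λ^T`. -/
structure IsLambdaBracket (B : (Fin D → ℤ) → A ℓ D → A ℓ D → A ℓ D) : Prop where
  add_left : ∀ (T : Fin D → ℤ) (f₁ f₂ g : A ℓ D), B T (f₁ + f₂) g = B T f₁ g + B T f₂ g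
  smul_left : ∀ (T : Fin D → ℤ) (c : ℂ) (f g : A ℓ D), B T (c • f) g = c • B T f g
  add_right : ∀ (T : Fin D → ℤ) (f g₁ g₂ : A ℓ D), B T f (g₁ + g₂) = B T f g₁ + B T f g₂
  smul_right : ∀ (T : Fin D → ℤ) (c : ℂ) (f g : A ℓ D), B T f (c • g) = c • B T f g
  finite : ∀ f g : A ℓ D, (Function.support fun T => B T f g).Finite
  sesqui_left : ∀ (T : Fin D → ℤ) (α : Fin D) (f g : A ℓ D),
    B T (Sh (E α) f) g = B (T + E α) f g
  sesqui_right : ∀ (T : Fin D → ℤ) (α : Fin D) (f g : A ℓ D),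
    B T f (Sh (E α) g) = Sh (E α) (B (T - E α) f g)
  leibniz_left : ∀ (T : Fin D → ℤ) (f g h : A ℓ D),
    B T f (g * h) = B T f g * h + B T f h * g
  leibniz_right : ∀ (T : Fin D → ℤ) (f g h : A ℓ D),
    B T (f * g) h = B T f h * Sh T g + B T g h * Sh T f

/-- Skewsymmetry of the λ-bracket: `B_{−T}(g,f) = −S^{−T}(B_T(f,g))`. -/
def IsSkew (B : (Fin D → ℤ) → A ℓ D → A ℓ D → A ℓ D) : Prop :=
  ∀ (f g : A ℓ D) (T : Fin D → ℤ), B (-T) g f = - Sh (-T) (B T f g)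

/-- The PVA-Jacobi identity, coefficient-wise in `λ^T μ^U`. -/
def IsJacobi (B : (Fin D → ℤ) → A ℓ D → A ℓ D → A ℓ D) : Prop :=
  ∀ (f g h : A ℓ D) (T U : Fin D → ℤ),
    B T f (B U g h) - B U g (B T f h) = B U (B (T - U) f g) h

/-- The bracket `{f,g} := {f_λ g}|_{λ=1} = Σ_T B_T(f,g)`. -/
noncomputable def br (B : (Fin D → ℤ) → A ℓ D → A ℓ D → A ℓ D) (f g : A ℓ D) : A ℓ D :=
  ∑ᶠ T : Fin D → ℤ, B T f g


section Helpers

variable {ℓ D : ℕ} {B : (Fin D → ℤ) → A ℓ D → A ℓ D → A ℓ D}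

lemma B_zero_left (hB : IsLambdaBracket B) (T : Fin D → ℤ) (g : A ℓ D) : B T 0 g = 0 := by
  have := hB.smul_left T 0 0 g
  simpa using this

lemma B_zero_right (hB : IsLambdaBracket B) (T : Fin D → ℤ) (f : A ℓ D) : B T f 0 = 0 := by
  have := hB.smul_right T 0 f 0
  simpa using this

lemma B_neg_left (hB : IsLambdaBracket B) (T : Fin D → ℤ) (f g : A ℓ D) :
    B T (-f) g = -(B T f g) := by
  have := hB.smul_left T (-1) f g
  simpa using this

lemma br_add_left (hB : IsLambdaBracket B) (x y p : A ℓ D) :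
    br B (x + y) p = br B x p + br B y p := by
  unfold br
  simp only [hB.add_left]
  exact finsum_add_distrib (hB.finite x p) (hB.finite y p)

lemma br_neg_left (hB : IsLambdaBracket B) (x p : A ℓ D) : br B (-x) p = - br B x p := by
  unfold br
  simp only [B_neg_left hB]
  exact finsum_neg_distrib _

lemma br_sub_left (hB : IsLambdaBracket B) (x y p : A ℓ D) :
    br B (x - y) p = br B x p - br B y p := by
  rw [sub_eq_add_neg, br_add_left hB, br_neg_left hB, sub_eq_add_neg]

lemma br_shift_left (hB : IsLambdaBracket B) (α : Fin D) (x p : A ℓ D) :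
    br B (Sh (E α) x) p = br B x p := by
  unfold br
  simp only [hB.sesqui_left]
  exact finsum_comp_equiv (Equiv.addRight (E α)) (f := fun T => B T x p)

/-- Swap of two finite sums. -/
lemma finsum_swap {M γ δ : Type*} [AddCommMonoid M] (F : γ → δ → M)
    (h : (Function.support fun q : γ × δ => F q.1 q.2).Finite) :
    ∑ᶠ i, ∑ᶠ j, F i j = ∑ᶠ j, ∑ᶠ i, F i j := by
  have h' : (Function.support fun q : δ × γ => F q.2 q.1).Finite := by
    have heq : (Function.support fun q : δ × γ => F q.2 q.1)
        = Prod.swap ⁻¹' (Function.support fun q : γ × δ => F q.1 q.2) := rfl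
    rw [heq]
    exact h.preimage Prod.swap_injective.injOn
  calc ∑ᶠ i, ∑ᶠ j, F i j
      = ∑ᶠ q : γ × δ, F q.1 q.2 := (finsum_curry (fun q : γ × δ => F q.1 q.2) h).symm
    _ = ∑ᶠ q : δ × γ, F q.2 q.1 :=
        finsum_comp_equiv (Equiv.prodComm γ δ) (f := fun q : δ × γ => F q.2 q.1)
    _ = ∑ᶠ j, ∑ᶠ i, F i j := finsum_curry (fun q : δ × γ => F q.2 q.1) h'

end Helpers

/-- for a skewsymmetric λ-bracket satisfying the PVA-Jacobi identity, the
Hamiltonian vector field `X_{∫h}(f) := {h,f}` (i) depends only on `∫h`, (ii) is a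
derivation of `A` commuting with all shifts `S_α`, and (iii) `∫h ↦ X_{∫h}` is a Lie
algebra morphism: `X_{{∫f,∫g}} = X_{∫f}∘X_{∫g} − X_{∫g}∘X_{∫f}`. -/
theorem hamiltonian_vector_fields (ℓ D : ℕ)
    (B : (Fin D → ℤ) → A ℓ D → A ℓ D → A ℓ D) (hB : IsLambdaBracket B)
    (hskew : IsSkew B) (hjac : IsJacobi B) :
    (∀ h h' : A ℓ D, InShiftIdeal (h - h') → ∀ f : A ℓ D, br B h f = br B h' f) ∧
    (∀ h f g : A ℓ D, br B h (f * g) = br B h f * g + f * br B h g) ∧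
    (∀ (h f : A ℓ D) (α : Fin D), br B h (Sh (E α) f) = Sh (E α) (br B h f)) ∧
    (∀ f g p : A ℓ D,
      br B (br B f g) p = br B f (br B g p) - br B g (br B f p)) := by
  refine ⟨?_, ?_, ?_, ?_⟩
  · -- (i)
    rintro h h' ⟨w, hw⟩ f
    have hsum : br B (h - h') f = 0 := by
      rw [hw]
      have hmap := map_sum (AddMonoidHom.mk' (fun x => br B x f)
        (fun a b => br_add_left hB a b f))
        (fun α => Sh (E α) (w α) - w α) Finset.univ
      refine hmap.trans (Finset.sum_eq_zero fun α _ => ?_)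
      show br B (Sh (E α) (w α) - w α) f = 0
      rw [br_sub_left hB, br_shift_left hB, sub_self]
    rw [br_sub_left hB] at hsum
    exact sub_eq_zero.mp hsum
  · -- (ii) derivation
    intro h f g
    have hf : (Function.support fun T => B T h f * g).Finite :=
      (hB.finite h f).subset (Function.support_mul_subset_left _ _)
    have hg : (Function.support fun T => B T h g * f).Finite :=
      (hB.finite h g).subset (Function.support_mul_subset_left _ _)
    unfold br
    simp only [hB.leibniz_left]
    rw [finsum_add_distrib hf hg, ← finsum_mul _ g,
      ← finsum_mul _ f]
    ring
  · -- (iii) commutes with shifts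
    intro h f α
    unfold br
    simp only [hB.sesqui_right]
    have hmap : (∑ᶠ T, Sh (E α) (B (T - E α) h f))
        = Sh (E α) (∑ᶠ T, B (T - E α) h f) :=
      (AddEquiv.map_finsum (Sh (E α) : A ℓ D ≃ₐ[ℂ] A ℓ D).toRingEquiv.toAddEquiv
        (fun T => B (T - E α) h f)).symm
    rw [hmap]
    congr 1
    exact finsum_comp_equiv (Equiv.subRight (E α)) (f := fun T => B T h f)
  · -- (iv) Lie algebra morphism
    intro f g p
    have hbfp := hB.finite f p
    have hbgp := hB.finite g p
    -- finiteness of the double support for the swap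
    have hdouble : (Function.support
        fun q : (Fin D → ℤ) × (Fin D → ℤ) => B q.2 f (B q.1 g p)).Finite := by
      have hS : (⋃ U ∈ (Function.support fun U => B U g p),
          Function.support fun T => B T f (B U g p)).Finite :=
        hbgp.biUnion fun U _ => hB.finite f _
      refine (hbgp.prod hS).subset ?_
      rintro ⟨U, T⟩ hq
      simp only [Function.mem_support] at hq
      have hU : B U g p ≠ 0 := by
        intro h0
        exact hq (by rw [h0, B_zero_right hB])
      exact Set.mem_prod.mpr ⟨hU, Set.mem_biUnion hU hq⟩
    have step1 : br B (br B f g) p = ∑ᶠ U, ∑ᶠ T, B U (B T f g) p := by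
      unfold br
      refine finsum_congr fun U => ?_
      exact (AddMonoidHom.mk' (fun x => B U x p)
        (fun a b => hB.add_left U a b p)).map_finsum (hB.finite f g)
    have step2 : ∀ U, (∑ᶠ T, B U (B T f g) p) = ∑ᶠ T, B U (B (T - U) f g) p := by
      intro U
      exact (finsum_comp_equiv (Equiv.subRight U)
        (f := fun T => B U (B T f g) p)).symm
    have step3 : ∀ U, (∑ᶠ T, B U (B (T - U) f g) p)
        = (∑ᶠ T, B T f (B U g p)) - B U g (br B f p) := by
      intro U
      have h2 : (Function.support fun T => B U g (B T f p)).Finite := by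
        refine hbfp.subset ?_
        intro T hT
        simp only [Function.mem_support] at hT ⊢
        intro h0
        exact hT (by rw [h0, B_zero_right hB])
      calc (∑ᶠ T, B U (B (T - U) f g) p)
          = ∑ᶠ T, (B T f (B U g p) - B U g (B T f p)) := by
            refine finsum_congr fun T => ?_
            exact (hjac f g p T U).symm
        _ = (∑ᶠ T, B T f (B U g p)) - ∑ᶠ T, B U g (B T f p) :=
            finsum_sub_distrib (hB.finite f _) h2
        _ = (∑ᶠ T, B T f (B U g p)) - B U g (br B f p) := by
            have h3 : (∑ᶠ T, B U g (B T f p)) = B U g (br B f p) :=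
              ((AddMonoidHom.mk' (fun x => B U g x)
                (fun a b => hB.add_right U g a b)).map_finsum hbfp).symm
            rw [h3]
    have houter1 : (Function.support fun U => ∑ᶠ T, B T f (B U g p)).Finite := by
      refine hbgp.subset ?_
      intro U hU
      simp only [Function.mem_support] at hU ⊢
      intro h0
      apply hU
      have : (fun T => B T f (B U g p)) = fun _ => 0 := by
        funext T; rw [h0, B_zero_right hB]
      rw [this, finsum_zero]
    have houter2 : (Function.support fun U => B U g (br B f p)).Finite :=
      hB.finite g _
    calc br B (br B f g) p
        = ∑ᶠ U, ((∑ᶠ T, B T f (B U g p)) - B U g (br B f p)) := by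
          rw [step1]
          exact finsum_congr fun U => (step2 U).trans (step3 U)
      _ = (∑ᶠ U, ∑ᶠ T, B T f (B U g p)) - ∑ᶠ U, B U g (br B f p) :=
          finsum_sub_distrib houter1 houter2
      _ = br B f (br B g p) - br B g (br B f p) := by
          congr 1
          calc (∑ᶠ U, ∑ᶠ T, B T f (B U g p))
              = ∑ᶠ T, ∑ᶠ U, B T f (B U g p) :=
                finsum_swap (fun U T => B T f (B U g p)) hdouble
            _ = br B f (br B g p) := by
                unfold br
                refine finsum_congr fun T => ?_
                exact ((AddMonoidHom.mk' (fun x => B T f x)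
                  (fun a b => hB.add_right T f a b)).map_finsum hbgp).symm


end MPVA
end

section
/- Let f : ℝ × ℝ → ℝ be continuously differentiable and nowhere vanishing, and suppose that f(x,y)·∂₂f(w,x) = f(w,x)·∂₁f(x,y) for all w, x, y ∈ ℝ, where ∂₁ and ∂₂ denote the partial derivatives with respect to the first and second argument. Then there exist a nonzero constant c ∈ ℝ and a continuously differentiable nowhere-vanishing function φ : ℝ → ℝ such that f(x,y) = c·φ(x)·φ(y) for all x, y ∈ ℝ. -/
/-- a continuously differentiable, nowhere vanishing `f : ℝ × ℝ → ℝ`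
satisfying `f(x,y)·∂₂f(w,x) = f(w,x)·∂₁f(x,y)` for all `w,x,y` factors as
`f(x,y) = c·φ(x)·φ(y)` with `c ≠ 0` and `φ` continuously differentiable and nowhere
vanishing. Here `∂₁f(a,b) = d/dt f(t,b)|_{t=a}` and `∂₂f(a,b) = d/dt f(a,t)|_{t=b}`. -/
theorem first_order_coefficient_factors (f : ℝ × ℝ → ℝ)
    (hf : ContDiff ℝ 1 f) (hf0 : ∀ p : ℝ × ℝ, f p ≠ 0)
    (heq : ∀ w x y : ℝ,
      f (x, y) * deriv (fun t => f (w, t)) x = f (w, x) * deriv (fun t => f (t, y)) x) :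
    ∃ (c : ℝ) (φ : ℝ → ℝ), c ≠ 0 ∧ ContDiff ℝ 1 φ ∧ (∀ x : ℝ, φ x ≠ 0) ∧
      ∀ x y : ℝ, f (x, y) = c * φ x * φ y := by
  have hfd : Differentiable ℝ f := hf.differentiable one_ne_zero
  have hd1 : ∀ y : ℝ, Differentiable ℝ (fun t => f (t, y)) := fun y =>
    hfd.comp (differentiable_id.prodMk (differentiable_const y))
  have hd2 : ∀ x : ℝ, Differentiable ℝ (fun t => f (x, t)) := fun x =>
    hfd.comp ((differentiable_const x).prodMk differentiable_id)
  have h00 : f (0, 0) ≠ 0 := hf0 (0, 0)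
  -- Step 1: f(x,y) * f(0,0) = f(x,0) * f(0,y)
  have key : ∀ x y : ℝ, f (x, y) * f (0, 0) = f (x, 0) * f (0, y) := by
    intro x y
    have hconst : ∀ a b : ℝ, (fun x => f (x, y) / f (x, 0)) a
        = (fun x => f (x, y) / f (x, 0)) b := by
      apply is_const_of_deriv_eq_zero
      · exact (hd1 y).div (hd1 0) (fun x => hf0 (x, 0))
      · intro x
        rw [deriv_fun_div ((hd1 y).differentiableAt) ((hd1 0).differentiableAt)
          (hf0 (x, 0))]
        have e1 := heq 0 x y
        have e2 := heq 0 x 0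
        have h0x : f (0, x) ≠ 0 := hf0 (0, x)
        rw [div_eq_zero_iff]
        left
        apply mul_left_cancel₀ h0x
        linear_combination (-(f (x, 0))) * e1 + f (x, y) * e2
    have h : f (x, y) / f (x, 0) = f (0, y) / f (0, 0) := hconst x 0
    rw [div_eq_div_iff (hf0 (x, 0)) h00] at h
    linear_combination h
  -- Step 2: f(0,y) = f(y,0)
  have sym : ∀ y : ℝ, f (0, y) = f (y, 0) := by
    intro y
    have hconst : ∀ a b : ℝ, (fun y => f (0, y) / f (y, 0)) a
        = (fun y => f (0, y) / f (y, 0)) b := by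
      apply is_const_of_deriv_eq_zero
      · exact (hd2 0).div (hd1 0) (fun y => hf0 (y, 0))
      · intro y
        rw [deriv_fun_div ((hd2 0).differentiableAt) ((hd1 0).differentiableAt)
          (hf0 (y, 0))]
        have e := heq 0 y 0
        rw [div_eq_zero_iff]
        left
        linear_combination e
    have h : f (0, y) / f (y, 0) = f (0, 0) / f (0, 0) := hconst y 0
    rw [div_self h00] at h
    exact (div_eq_one_iff_eq (hf0 (y, 0))).mp h
  refine ⟨(f (0, 0))⁻¹, fun x => f (x, 0), inv_ne_zero h00,
    hf.comp (contDiff_id.prodMk contDiff_const), fun x => hf0 (x, 0), ?_⟩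
  intro x y
  rw [mul_assoc, inv_mul_eq_div, eq_div_iff h00]
  linear_combination key x y + f (x, 0) * sym y
end

section
/- Let f ∈ A depend only on the single variable u, and let α, β ∈ ℂ. Then the master-formula λ-bracket with generator coefficients P_{(1,0)} = α·f·S₁(f), P_{(0,1)} = β·f·S₂(f), P_{(−1,0)} = −α·f·S₁^{−1}(f), P_{(0,−1)} = −β·f·S₂^{−1}(f), and P_T = 0 otherwise, corresponding to the difference operator P = f(u)(α S₁ + β S₂ − β S₂^{−1} − α S₁^{−1})∘f(u), is skewsymmetric and satisfies the PVA-Jacobi identity for all triples of elements of A; i.e. P is a Hamiltonian difference operator. -/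
open MvPolynomial

namespace MPVA

variable {ℓ D : ℕ}

/-- For `D = 2`: the lattice point `(m,n) ∈ ℤ²`. -/
def v (m n : ℤ) : Fin 2 → ℤ := ![m, n]

/-- For `D = 2`, `ℓ = 1`: the variable `u_{mn}` of the scalar two-dimensional algebra. -/
noncomputable def uu (m n : ℤ) : A 1 2 := X ((0 : Fin 1), v m n)

abbrev II := Fin 2 → ℤ
abbrev AA := A 1 2
lemma Sh_apply (M : II) (p : AA) :
    Sh M p = rename (fun x : Fin 1 × II => (x.1, x.2 + M)) p := rfl
lemma Sh_Sh_s16 (M N : II) (p : AA) : Sh M (Sh N p) = Sh (N + M) p := by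
  rw [Sh_apply, Sh_apply, Sh_apply, rename_rename]
  have : ((fun x : Fin 1 × II => (x.1, x.2 + M)) ∘ fun x : Fin 1 × II => (x.1, x.2 + N))
      = fun x : Fin 1 × II => (x.1, x.2 + (N + M)) := by
    funext x; simp [Function.comp, add_assoc]
  rw [this]
lemma Sh_zero (p : AA) : Sh (0 : II) p = p := by
  rw [Sh_apply]
  have : (fun x : Fin 1 × II => (x.1, x.2 + 0)) = id := by funext x; simp
  rw [this, rename_id, AlgHom.id_apply]
lemma Sh_C (M : II) (a : ℂ) : Sh M (C a : AA) = C a := by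
  rw [Sh_apply, rename_C]
lemma pderiv_Sh_s16 (N K : II) (q : AA) :
    pderiv ((0 : Fin 1), N) (Sh K q) = Sh K (pderiv ((0 : Fin 1), N - K) q) := by
  have hinj : Function.Injective (fun x : Fin 1 × II => (x.1, x.2 + K)) := by
    intro a b h
    simpa [Prod.ext_iff, add_left_injective K |>.eq_iff] using h
  have := pderiv_rename hinj ((0 : Fin 1), N - K) q
  rw [Sh_apply, Sh_apply, ← this]
  simp only [sub_add_cancel]
lemma pderiv_comm' {σ : Type*} (i j : σ) (p : MvPolynomial σ ℂ) :
    pderiv i (pderiv j p) = pderiv j (pderiv i p) := by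
  classical
  induction p using MvPolynomial.induction_on with
  | C a => simp
  | add p q hp hq => simp [hp, hq]
  | mul_X p n hp =>
    have hX : ∀ k l : σ, pderiv k (pderiv l (X n : MvPolynomial σ ℂ)) = 0 := by
      intro k l
      rw [pderiv_X]
      rcases eq_or_ne n l with h | h <;> simp [h, Pi.single_apply]
    simp only [pderiv_mul, map_add, pderiv_mul, hp, hX]
    ring

def cc (α β : ℂ) (T : II) : ℂ :=
  if T = v 1 0 then α else if T = v 0 1 then β
  else if T = v (-1) 0 then -α else if T = v 0 (-1) then -β else 0


lemma v_inj {m n m' n' : ℤ} : v m n = v m' n' ↔ m = m' ∧ n = n' := by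
  constructor
  · intro h
    exact ⟨by simpa [v] using congrFun h 0, by simpa [v] using congrFun h 1⟩
  · rintro ⟨rfl, rfl⟩; rfl

lemma neg_v (m n : ℤ) : -v m n = v (-m) (-n) := by
  funext i
  fin_cases i <;> simp [v]

lemma cc_neg (α β : ℂ) (T : II) : cc α β (-T) = - cc α β T := by
  have h10 : (1 : ℤ) ≠ -1 := by norm_num
  by_cases h1 : T = v 1 0
  · subst h1; rw [neg_v]; simp [cc, v_inj]
  by_cases h2 : T = v 0 1
  · subst h2; rw [neg_v]; simp [cc, v_inj]
  by_cases h3 : T = v (-1) 0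
  · subst h3; rw [neg_v]; simp [cc, v_inj]
  by_cases h4 : T = v 0 (-1)
  · subst h4; rw [neg_v]; simp [cc, v_inj]
  · have e : ∀ m n : ℤ, -T = v m n ↔ T = v (-m) (-n) := by
      intro m n
      rw [neg_eq_iff_eq_neg, neg_v]
    rw [cc, cc]
    rw [if_neg (by rw [e]; simpa using h3), if_neg (by rw [e]; simpa using h4),
      if_neg (by rw [e]; simpa using h1), if_neg (by rw [e]; simpa using h2),
      if_neg h1, if_neg h2, if_neg h3, if_neg h4]
    simp


/-- `Y_N(q) = S^N f · ∂q/∂u_N`. -/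
noncomputable def Y (f : AA) (N : II) (q : AA) : AA :=
  Sh N f * pderiv ((0 : Fin 1), N) q

section YLemmas
variable (f : AA)

lemma Y_zero (N : II) : Y f N 0 = 0 := by simp [Y]

lemma Y_of_eq_zero {N : II} {q : AA} (h : q = 0) : Y f N q = 0 := by simp [Y, h]

lemma Y_C_mul (N : II) (a : ℂ) (q : AA) : Y f N (C a * q) = C a * Y f N q := by
  simp [Y, pderiv_C_mul]; ring

lemma Y_mul (N : II) (p q : AA) : Y f N (p * q) = Y f N p * q + p * Y f N q := by
  simp [Y, pderiv_mul]; ring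

lemma Sh_Y (K N : II) (q : AA) : Sh K (Y f N q) = Y f (N + K) (Sh K q) := by
  simp only [Y, map_mul, Sh_Sh_s16, pderiv_Sh_s16, add_sub_cancel_right]

lemma Y_Sh (N K : II) (q : AA) : Y f N (Sh K q) = Sh K (Y f (N - K) q) := by
  rw [Sh_Y]
  congr 1
  abel

lemma Y_comm (hfdep : ∀ N : II, N ≠ 0 → pderiv ((0 : Fin 1), N) f = 0)
    (M N : II) (q : AA) : Y f M (Y f N q) = Y f N (Y f M q) := by
  rcases eq_or_ne M N with rfl | hMN
  · rfl
  · have key : ∀ a b : II, a ≠ b → Y f a (Y f b q) =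
        Sh a f * (Sh b f * pderiv ((0:Fin 1), a) (pderiv ((0:Fin 1), b) q)) := by
      intro a b hab
      simp only [Y, pderiv_mul]
      rw [pderiv_Sh_s16 a b f, hfdep (a - b) (sub_ne_zero.mpr hab), map_zero, zero_mul, zero_add]
    rw [key M N hMN, key N M hMN.symm, pderiv_comm']
    ring

end YLemmas

section Finiteness
variable (f : AA)

lemma DS_finite (q : AA) : {N : II | pderiv ((0 : Fin 1), N) q ≠ 0}.Finite := by
  have hinj : Set.InjOn (fun N : II => ((0 : Fin 1), N))
      ((fun N : II => ((0 : Fin 1), N)) ⁻¹' (↑q.vars : Set (Fin 1 × II))) :=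
    fun a _ b _ h => congrArg Prod.snd h
  refine (Set.Finite.preimage hinj q.vars.finite_toSet).subset ?_
  intro N hN
  simp only [Set.mem_preimage, Finset.mem_coe]
  by_contra h
  exact hN (pderiv_eq_zero_of_notMem_vars h)

lemma YS_finite (q : AA) : {N : II | Y f N q ≠ 0}.Finite :=
  (DS_finite q).subset fun N hN h0 => hN (by simp [Y, h0])

lemma YYS_finite (q : AA) : {x : II × II | Y f x.1 (Y f x.2 q) ≠ 0}.Finite := by
  apply Set.Finite.subset (Set.Finite.biUnion (YS_finite f q)
    (fun L _ => ((YS_finite f (Y f L q)).prod (Set.finite_singleton L))))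
  rintro ⟨N, L⟩ hx
  have hL : Y f L q ≠ 0 := fun h => hx (by simp only [h, Y_zero])
  exact Set.mem_biUnion hL ⟨hx, rfl⟩

lemma supp_fin4 {F : (II × II) × (II × II) → AA} {s1 s2 s3 s4 : Set II}
    (h1 : s1.Finite) (h2 : s2.Finite) (h3 : s3.Finite) (h4 : s4.Finite)
    (h : ∀ x, F x ≠ 0 → x.1.1 ∈ s1 ∧ x.1.2 ∈ s2 ∧ x.2.1 ∈ s3 ∧ x.2.2 ∈ s4) :
    (Function.support F).Finite := by
  apply ((h1.prod h2).prod (h3.prod h4)).subset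
  intro x hx
  obtain ⟨a, b, c, d⟩ := h x hx
  exact ⟨⟨a, b⟩, c, d⟩

lemma supp_fin2 {F : II × II → AA} {s1 s2 : Set II}
    (h1 : s1.Finite) (h2 : s2.Finite)
    (h : ∀ x, F x ≠ 0 → x.1 ∈ s1 ∧ x.2 ∈ s2) :
    (Function.support F).Finite :=
  (h1.prod h2).subset fun x hx => h x hx

end Finiteness

noncomputable def bb (f : AA) (α β : ℂ) (T : II) (p q : AA) : AA :=
  ∑ᶠ x : II × II, C (cc α β (T + x.1 - x.2)) * (Y f x.2 q * Sh T (Y f x.1 p))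

section Beq
variable (f : AA) (α β : ℂ) (P : Fin 1 → Fin 1 → II → AA)
  (hP : P = fun _ _ T =>
      if T = v 1 0 then C α * (f * Sh (v 1 0) f)
      else if T = v 0 1 then C β * (f * Sh (v 0 1) f)
      else if T = v (-1) 0 then -(C α * (f * Sh (v (-1) 0) f))
      else if T = v 0 (-1) then -(C β * (f * Sh (v 0 (-1)) f))
      else 0)

include hP

lemma P_eq : ∀ (i j : Fin 1) (K : II), P i j K = C (cc α β K) * (f * Sh K f) := by
  intro i j K
  rw [hP]
  simp only [cc]
  split_ifs with h1 h2 h3 h4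
  · rw [h1]
  · rw [h2]
  · rw [h3, map_neg, neg_mul]
  · rw [h4, map_neg, neg_mul]
  · rw [map_zero, zero_mul]

lemma B_eq_s16 (T : II) (p q : AA) : B P T p q = bb f α β T p q := by
  have h2 : ∀ M N : II,
      pderiv ((0 : Fin 1), N) q * Sh N (P 0 0 (T - N + M)) * Sh T (pderiv ((0 : Fin 1), M) p)
        = C (cc α β (T + M - N)) * (Y f N q * Sh T (Y f M p)) := by
    intro M N
    rw [P_eq f α β P hP]
    simp only [map_mul, Sh_C, Sh_Sh_s16, Y]
    rw [show T - N + M + N = T + M by abel, show T - N + M = T + M - N by abel,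
      show (M + T : II) = T + M from add_comm M T]
    ring
  have h1 : B P T p q = ∑ᶠ (M : II) (N : II),
      pderiv ((0 : Fin 1), N) q * Sh N (P 0 0 (T - N + M)) * Sh T (pderiv ((0 : Fin 1), M) p) := by
    rw [B]
    rw [finsum_unique, finsum_unique]
    simp only [Fin.default_eq_zero]
  rw [h1]
  have h3 : (∑ᶠ (M : II) (N : II),
      pderiv ((0 : Fin 1), N) q * Sh N (P 0 0 (T - N + M)) * Sh T (pderiv ((0 : Fin 1), M) p))
      = ∑ᶠ (M : II) (N : II), C (cc α β (T + M - N)) * (Y f N q * Sh T (Y f M p)) :=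
    finsum_congr fun M => finsum_congr fun N => h2 M N
  rw [h3, bb]
  refine (finsum_curry (fun x : II × II => C (cc α β (T + x.1 - x.2)) * (Y f x.2 q * Sh T (Y f x.1 p))) ?_).symm
  refine supp_fin2 (YS_finite f p) (YS_finite f q) fun x hx => ?_
  constructor
  · intro h0; exact hx (by simp [h0])
  · intro h0; exact hx (by simp [h0])

end Beq

lemma Sh_finsum_s16 {γ : Type*} (K : II) (F : γ → AA) :
    Sh K (∑ᶠ y, F y) = ∑ᶠ y, Sh K (F y) :=
  AddEquiv.map_finsum (Sh K : AA ≃ₐ[ℂ] AA).toRingEquiv.toAddEquiv F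

lemma bb_skew (f : AA) (α β : ℂ) (T : II) (p q : AA) :
    bb f α β (-T) q p = - Sh (-T) (bb f α β T p q) := by
  rw [bb, bb, Sh_finsum_s16, ← finsum_neg_distrib]
  rw [← finsum_comp_equiv (Equiv.prodComm II II)]
  refine finsum_congr fun x => ?_
  simp only [Equiv.prodComm_apply, Prod.fst_swap, Prod.snd_swap, map_mul, Sh_C, Sh_Sh_s16]
  rw [show T + -T = (0 : II) by abel, Sh_zero,
    show -T + x.2 - x.1 = -(T + x.1 - x.2) by abel, cc_neg, map_neg]
  ring

noncomputable def Yhom (f : AA) (N : II) : AA →+ AA :=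
  (AddMonoidHom.mulLeft (Sh N f)).comp (pderiv ((0 : Fin 1), N)).toAddMonoidHom

lemma Yhom_apply (f : AA) (N : II) (q : AA) : Yhom f N q = Y f N q := rfl

lemma Y_finsum {γ : Type*} (f : AA) (N : II) (F : γ → AA)
    (hF : (Function.support F).Finite) :
    Y f N (∑ᶠ y, F y) = ∑ᶠ y, Y f N (F y) := by
  have h := (Yhom f N).map_finsum (f := F) hF
  simpa only [Yhom_apply] using h

lemma supp_mul_right {γ : Type*} {F : γ → AA} (hF : (Function.support F).Finite)
    (Z : AA) : (Function.support fun y => F y * Z).Finite :=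
  hF.subset fun y hy h0 => hy (show F y * Z = 0 by rw [h0, zero_mul])

lemma Y_bb (f : AA) (α β : ℂ) (N U : II) (g h : AA) :
    Y f N (bb f α β U g h) = ∑ᶠ y : II × II, C (cc α β (U + y.1 - y.2)) *
      (Y f N (Y f y.2 h) * Sh U (Y f y.1 g)
        + Y f y.2 h * Sh U (Y f (N - U) (Y f y.1 g))) := by
  rw [bb, Y_finsum f N _ (supp_fin2 (YS_finite f g) (YS_finite f h)
    (fun y hy => ⟨fun h0 => hy (by simp [h0]), fun h0 => hy (by simp [h0])⟩))]
  refine finsum_congr fun y => ?_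
  rw [Y_C_mul, Y_mul, Y_Sh]

abbrev V := (II × II) × (II × II)

lemma expandL (f : AA) (α β : ℂ) (T U : II) (p g h : AA) :
    bb f α β T p (bb f α β U g h) = ∑ᶠ x : V,
      (C (cc α β (T + x.1.1 - x.1.2)) * C (cc α β (U + x.2.1 - x.2.2)) *
        (Y f x.1.2 (Y f x.2.2 h) * (Sh U (Y f x.2.1 g) * Sh T (Y f x.1.1 p)))
      + C (cc α β (T + x.1.1 - x.1.2)) * C (cc α β (U + x.2.1 - x.2.2)) *
        (Y f x.2.2 h * (Sh U (Y f (x.1.2 - U) (Y f x.2.1 g)) * Sh T (Y f x.1.1 p)))) := by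
  have hG : ∀ x : II × II, (Function.support fun y : II × II =>
      C (cc α β (U + y.1 - y.2)) * (Y f x.2 (Y f y.2 h) * Sh U (Y f y.1 g)
        + Y f y.2 h * Sh U (Y f (x.2 - U) (Y f y.1 g)))).Finite := by
    intro x
    refine supp_fin2 (YS_finite f g) (YS_finite f h) fun y hy => ?_
    exact ⟨fun h0 => hy (by simp [h0, Y_zero]), fun h0 => hy (by simp [h0, Y_zero])⟩
  have hflat : (Function.support fun z : V =>
      C (cc α β (T + z.1.1 - z.1.2)) * C (cc α β (U + z.2.1 - z.2.2)) *
        (Y f z.1.2 (Y f z.2.2 h) * (Sh U (Y f z.2.1 g) * Sh T (Y f z.1.1 p)))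
      + C (cc α β (T + z.1.1 - z.1.2)) * C (cc α β (U + z.2.1 - z.2.2)) *
        (Y f z.2.2 h * (Sh U (Y f (z.1.2 - U) (Y f z.2.1 g)) * Sh T (Y f z.1.1 p)))).Finite := by
    refine supp_fin4 (YS_finite f p)
      ((((YYS_finite f h).image Prod.fst).union
        (((YYS_finite f g).image Prod.fst).image (· + U))))
      (YS_finite f g) (YS_finite f h) fun z hz => ?_
    refine ⟨fun h0 => hz (by simp [h0, Y_zero]), ?_,
      fun h0 => hz (by simp [h0, Y_zero]), fun h0 => hz (by simp [h0, Y_zero])⟩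
    by_cases h1 : Y f z.1.2 (Y f z.2.2 h) = 0
    · by_cases h2 : Y f (z.1.2 - U) (Y f z.2.1 g) = 0
      · exact absurd (by simp [h1, h2]) hz
      · exact Set.mem_union_right _ ⟨z.1.2 - U, ⟨(z.1.2 - U, z.2.1), h2, rfl⟩, sub_add_cancel _ _⟩
    · exact Set.mem_union_left _ ⟨(z.1.2, z.2.2), h1, rfl⟩
  have step1 : ∀ x : II × II,
      C (cc α β (T + x.1 - x.2)) * (Y f x.2 (bb f α β U g h) * Sh T (Y f x.1 p))
      = ∑ᶠ y : II × II,
        (C (cc α β (T + x.1 - x.2)) * C (cc α β (U + y.1 - y.2)) *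
          (Y f x.2 (Y f y.2 h) * (Sh U (Y f y.1 g) * Sh T (Y f x.1 p)))
        + C (cc α β (T + x.1 - x.2)) * C (cc α β (U + y.1 - y.2)) *
          (Y f y.2 h * (Sh U (Y f (x.2 - U) (Y f y.1 g)) * Sh T (Y f x.1 p)))) := by
    intro x
    rw [Y_bb f α β x.2 U g h]
    rw [finsum_mul' _ _ (hG x), mul_finsum' _ _ (supp_mul_right (hG x) _)]
    exact finsum_congr fun y => by ring
  rw [bb, finsum_congr step1]
  exact (finsum_curry _ hflat).symm

lemma supp_mul_left {γ : Type*} {F : γ → AA} (hF : (Function.support F).Finite)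
    (Z : AA) : (Function.support fun y => Z * F y).Finite :=
  hF.subset fun y hy h0 => hy (show Z * F y = 0 by rw [h0, mul_zero])

lemma expandR (f : AA) (α β : ℂ) (T U : II) (p g h : AA) :
    bb f α β U (bb f α β (T - U) p g) h = ∑ᶠ x : V,
      (C (cc α β (U + x.1.1 - x.1.2)) * C (cc α β (T - U + x.2.1 - x.2.2)) *
        (Y f x.1.2 h * (Sh U (Y f x.1.1 (Y f x.2.2 g)) * Sh T (Y f x.2.1 p)))
      + C (cc α β (U + x.1.1 - x.1.2)) * C (cc α β (T - U + x.2.1 - x.2.2)) *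
        (Y f x.1.2 h * (Sh U (Y f x.2.2 g) * Sh T (Y f (x.1.1 - T + U) (Y f x.2.1 p))))) := by
  have hE : ∀ x : II × II, (Function.support fun y : II × II =>
      Sh U (C (cc α β (T - U + y.1 - y.2)) *
        (Y f x.1 (Y f y.2 g) * Sh (T - U) (Y f y.1 p)
          + Y f y.2 g * Sh (T - U) (Y f (x.1 - (T - U)) (Y f y.1 p))))).Finite := by
    intro x
    refine supp_fin2 (YS_finite f p) (YS_finite f g) fun y hy => ?_
    exact ⟨fun h0 => hy (by simp [h0, Y_zero]), fun h0 => hy (by simp [h0, Y_zero])⟩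
  have hflat : (Function.support fun z : V =>
      C (cc α β (U + z.1.1 - z.1.2)) * C (cc α β (T - U + z.2.1 - z.2.2)) *
        (Y f z.1.2 h * (Sh U (Y f z.1.1 (Y f z.2.2 g)) * Sh T (Y f z.2.1 p)))
      + C (cc α β (U + z.1.1 - z.1.2)) * C (cc α β (T - U + z.2.1 - z.2.2)) *
        (Y f z.1.2 h * (Sh U (Y f z.2.2 g) * Sh T (Y f (z.1.1 - T + U) (Y f z.2.1 p))))).Finite := by
    refine supp_fin4
      ((((YYS_finite f g).image Prod.fst).union
        (((YYS_finite f p).image Prod.fst).image (fun a => a + T - U))))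
      (YS_finite f h) (YS_finite f p) (YS_finite f g) fun z hz => ?_
    refine ⟨?_, fun h0 => hz (by simp [h0, Y_zero]),
      fun h0 => hz (by simp [h0, Y_zero]), fun h0 => hz (by simp [h0, Y_zero])⟩
    by_cases h1 : Y f z.1.1 (Y f z.2.2 g) = 0
    · by_cases h2 : Y f (z.1.1 - T + U) (Y f z.2.1 p) = 0
      · exact absurd (by simp [h1, h2]) hz
      · refine Set.mem_union_right _ ⟨z.1.1 - T + U, ⟨(z.1.1 - T + U, z.2.1), h2, rfl⟩, ?_⟩
        show z.1.1 - T + U + T - U = z.1.1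
        abel
    · exact Set.mem_union_left _ ⟨(z.1.1, z.2.2), h1, rfl⟩
  have step1 : ∀ x : II × II,
      C (cc α β (U + x.1 - x.2)) * (Y f x.2 h * Sh U (Y f x.1 (bb f α β (T - U) p g)))
      = ∑ᶠ y : II × II,
        (C (cc α β (U + x.1 - x.2)) * C (cc α β (T - U + y.1 - y.2)) *
          (Y f x.2 h * (Sh U (Y f x.1 (Y f y.2 g)) * Sh T (Y f y.1 p)))
        + C (cc α β (U + x.1 - x.2)) * C (cc α β (T - U + y.1 - y.2)) *
          (Y f x.2 h * (Sh U (Y f y.2 g) * Sh T (Y f (x.1 - T + U) (Y f y.1 p))))) := by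
    intro x
    rw [Y_bb f α β x.1 (T - U) p g, Sh_finsum_s16]
    rw [mul_finsum' _ _ (hE x), mul_finsum' _ _ (supp_mul_left (hE x) _)]
    refine finsum_congr fun y => ?_
    simp only [map_mul, map_add, Sh_C, Sh_Sh_s16]
    rw [show T - U + U = T by abel, show x.1 - (T - U) = x.1 - T + U by abel]
    ring
  rw [bb, finsum_congr step1]
  exact (finsum_curry _ hflat).symm

def e2 (U : II) : V ≃ V where
  toFun x := ((x.2.1, x.2.2), (x.1.1, x.1.2 - U))
  invFun z := ((z.2.1, z.2.2 + U), (z.1.1, z.1.2))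
  left_inv := by rintro ⟨⟨a, b⟩, ⟨c, d⟩⟩; simp
  right_inv := by rintro ⟨⟨a, b⟩, ⟨c, d⟩⟩; simp

def e3 (T U : II) : V ≃ V where
  toFun x := ((x.2.1 + T - U, x.2.2), (x.1.2 - T, x.1.1))
  invFun z := ((z.2.2, z.2.1 + T), (z.1.1 - T + U, z.1.2))
  left_inv := by
    rintro ⟨⟨M, N⟩, ⟨K, L⟩⟩
    have h1 : N - T + T = N := sub_add_cancel _ _
    have h2 : K + T - U - T + U = K := by abel
    simp [h1, h2]
  right_inv := by
    rintro ⟨⟨a, b⟩, ⟨c, d⟩⟩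
    have h1 : c + T - T = c := add_sub_cancel_right _ _
    have h2 : a - T + U + T - U = a := by abel
    simp [h1, h2]

section Sums
variable (f : AA) (hfdep : ∀ N : II, N ≠ 0 → pderiv ((0 : Fin 1), N) f = 0)
  (α β : ℂ) (T U : II) (p g h : AA)

include hfdep

lemma sumA1_eq_sumB1 :
    (∑ᶠ x : V, C (cc α β (T + x.1.1 - x.1.2)) * C (cc α β (U + x.2.1 - x.2.2)) *
      (Y f x.1.2 (Y f x.2.2 h) * (Sh U (Y f x.2.1 g) * Sh T (Y f x.1.1 p))))
    = ∑ᶠ x : V, C (cc α β (U + x.1.1 - x.1.2)) * C (cc α β (T + x.2.1 - x.2.2)) *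
      (Y f x.1.2 (Y f x.2.2 h) * (Sh T (Y f x.2.1 p) * Sh U (Y f x.1.1 g))) := by
  refine Eq.trans (finsum_congr fun x => ?_)
    (finsum_comp_equiv (Equiv.prodComm (II × II) (II × II)) (f := fun x : V =>
      C (cc α β (U + x.1.1 - x.1.2)) * C (cc α β (T + x.2.1 - x.2.2)) *
      (Y f x.1.2 (Y f x.2.2 h) * (Sh T (Y f x.2.1 p) * Sh U (Y f x.1.1 g)))))
  show C (cc α β (T + x.1.1 - x.1.2)) * C (cc α β (U + x.2.1 - x.2.2)) *
      (Y f x.1.2 (Y f x.2.2 h) * (Sh U (Y f x.2.1 g) * Sh T (Y f x.1.1 p)))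
    = C (cc α β (U + x.2.1 - x.2.2)) * C (cc α β (T + x.1.1 - x.1.2)) *
      (Y f x.2.2 (Y f x.1.2 h) * (Sh T (Y f x.1.1 p) * Sh U (Y f x.2.1 g)))
  rw [Y_comm f hfdep x.2.2 x.1.2 h]
  ring

lemma sumA2_eq_sumC1 :
    (∑ᶠ x : V, C (cc α β (T + x.1.1 - x.1.2)) * C (cc α β (U + x.2.1 - x.2.2)) *
      (Y f x.2.2 h * (Sh U (Y f (x.1.2 - U) (Y f x.2.1 g)) * Sh T (Y f x.1.1 p))))
    = ∑ᶠ x : V, C (cc α β (U + x.1.1 - x.1.2)) * C (cc α β (T - U + x.2.1 - x.2.2)) *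
      (Y f x.1.2 h * (Sh U (Y f x.1.1 (Y f x.2.2 g)) * Sh T (Y f x.2.1 p))) := by
  refine Eq.trans (finsum_congr fun x => ?_)
    (finsum_comp_equiv (e2 U) (f := fun x : V =>
      C (cc α β (U + x.1.1 - x.1.2)) * C (cc α β (T - U + x.2.1 - x.2.2)) *
      (Y f x.1.2 h * (Sh U (Y f x.1.1 (Y f x.2.2 g)) * Sh T (Y f x.2.1 p)))))
  show C (cc α β (T + x.1.1 - x.1.2)) * C (cc α β (U + x.2.1 - x.2.2)) *
      (Y f x.2.2 h * (Sh U (Y f (x.1.2 - U) (Y f x.2.1 g)) * Sh T (Y f x.1.1 p)))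
    = C (cc α β (U + x.2.1 - x.2.2)) * C (cc α β (T - U + x.1.1 - (x.1.2 - U))) *
      (Y f x.2.2 h * (Sh U (Y f x.2.1 (Y f (x.1.2 - U) g)) * Sh T (Y f x.1.1 p)))
  rw [Y_comm f hfdep x.2.1 (x.1.2 - U) g,
    show T - U + x.1.1 - (x.1.2 - U) = T + x.1.1 - x.1.2 by abel]
  ring

lemma sumC2_eq_neg_sumB2 :
    (∑ᶠ x : V, C (cc α β (U + x.1.1 - x.1.2)) * C (cc α β (T - U + x.2.1 - x.2.2)) *
      (Y f x.1.2 h * (Sh U (Y f x.2.2 g) * Sh T (Y f (x.1.1 - T + U) (Y f x.2.1 p)))))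
    = -∑ᶠ x : V, C (cc α β (U + x.1.1 - x.1.2)) * C (cc α β (T + x.2.1 - x.2.2)) *
      (Y f x.2.2 h * (Sh T (Y f (x.1.2 - T) (Y f x.2.1 p)) * Sh U (Y f x.1.1 g))) := by
  rw [← finsum_comp_equiv (e3 T U) (f := fun x : V =>
    C (cc α β (U + x.1.1 - x.1.2)) * C (cc α β (T - U + x.2.1 - x.2.2)) *
      (Y f x.1.2 h * (Sh U (Y f x.2.2 g) * Sh T (Y f (x.1.1 - T + U) (Y f x.2.1 p))))),
    ← finsum_neg_distrib]
  refine finsum_congr fun x => ?_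
  show C (cc α β (U + (x.2.1 + T - U) - x.2.2)) * C (cc α β (T - U + (x.1.2 - T) - x.1.1)) *
      (Y f x.2.2 h * (Sh U (Y f x.1.1 g) * Sh T (Y f (x.2.1 + T - U - T + U) (Y f (x.1.2 - T) p))))
    = -(C (cc α β (U + x.1.1 - x.1.2)) * C (cc α β (T + x.2.1 - x.2.2)) *
      (Y f x.2.2 h * (Sh T (Y f (x.1.2 - T) (Y f x.2.1 p)) * Sh U (Y f x.1.1 g))))
  rw [show U + (x.2.1 + T - U) - x.2.2 = T + x.2.1 - x.2.2 by abel,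
    show T - U + (x.1.2 - T) - x.1.1 = -(U + x.1.1 - x.1.2) by abel,
    show x.2.1 + T - U - T + U = x.2.1 by abel,
    cc_neg, map_neg, Y_comm f hfdep x.2.1 (x.1.2 - T) p]
  ring

end Sums

lemma bb_jacobi (f : AA) (hfdep : ∀ N : II, N ≠ 0 → pderiv ((0 : Fin 1), N) f = 0)
    (α β : ℂ) (T U : II) (p g h : AA) :
    bb f α β T p (bb f α β U g h) - bb f α β U g (bb f α β T p h)
      = bb f α β U (bb f α β (T - U) p g) h := by
  have hA1 : (Function.support fun x : V =>
      C (cc α β (T + x.1.1 - x.1.2)) * C (cc α β (U + x.2.1 - x.2.2)) *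
        (Y f x.1.2 (Y f x.2.2 h) * (Sh U (Y f x.2.1 g) * Sh T (Y f x.1.1 p)))).Finite := by
    refine supp_fin4 (YS_finite f p) ((YYS_finite f h).image Prod.fst)
      (YS_finite f g) (YS_finite f h) fun x hx => ?_
    have hyy : Y f x.1.2 (Y f x.2.2 h) ≠ 0 := fun h0 => hx (by simp [h0])
    exact ⟨fun h0 => hx (by simp [h0]), ⟨(x.1.2, x.2.2), hyy, rfl⟩,
      fun h0 => hx (by simp [h0]), fun h0 => hx (by simp [h0, Y_zero])⟩
  have hA2 : (Function.support fun x : V =>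
      C (cc α β (T + x.1.1 - x.1.2)) * C (cc α β (U + x.2.1 - x.2.2)) *
        (Y f x.2.2 h * (Sh U (Y f (x.1.2 - U) (Y f x.2.1 g)) * Sh T (Y f x.1.1 p)))).Finite := by
    refine supp_fin4 (YS_finite f p) (((YYS_finite f g).image Prod.fst).image (· + U))
      (YS_finite f g) (YS_finite f h) fun x hx => ?_
    have hyy : Y f (x.1.2 - U) (Y f x.2.1 g) ≠ 0 := fun h0 => hx (by simp [h0])
    exact ⟨fun h0 => hx (by simp [h0]),
      ⟨x.1.2 - U, ⟨(x.1.2 - U, x.2.1), hyy, rfl⟩, sub_add_cancel _ _⟩,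
      fun h0 => hx (by simp [h0, Y_zero]), fun h0 => hx (by simp [h0])⟩
  have hB1 : (Function.support fun x : V =>
      C (cc α β (U + x.1.1 - x.1.2)) * C (cc α β (T + x.2.1 - x.2.2)) *
        (Y f x.1.2 (Y f x.2.2 h) * (Sh T (Y f x.2.1 p) * Sh U (Y f x.1.1 g)))).Finite := by
    refine supp_fin4 (YS_finite f g) ((YYS_finite f h).image Prod.fst)
      (YS_finite f p) (YS_finite f h) fun x hx => ?_
    have hyy : Y f x.1.2 (Y f x.2.2 h) ≠ 0 := fun h0 => hx (by simp [h0])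
    exact ⟨fun h0 => hx (by simp [h0]), ⟨(x.1.2, x.2.2), hyy, rfl⟩,
      fun h0 => hx (by simp [h0]), fun h0 => hx (by simp [h0, Y_zero])⟩
  have hB2 : (Function.support fun x : V =>
      C (cc α β (U + x.1.1 - x.1.2)) * C (cc α β (T + x.2.1 - x.2.2)) *
        (Y f x.2.2 h * (Sh T (Y f (x.1.2 - T) (Y f x.2.1 p)) * Sh U (Y f x.1.1 g)))).Finite := by
    refine supp_fin4 (YS_finite f g) (((YYS_finite f p).image Prod.fst).image (· + T))
      (YS_finite f p) (YS_finite f h) fun x hx => ?_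
    have hyy : Y f (x.1.2 - T) (Y f x.2.1 p) ≠ 0 := fun h0 => hx (by simp [h0])
    exact ⟨fun h0 => hx (by simp [h0]),
      ⟨x.1.2 - T, ⟨(x.1.2 - T, x.2.1), hyy, rfl⟩, sub_add_cancel _ _⟩,
      fun h0 => hx (by simp [h0, Y_zero]), fun h0 => hx (by simp [h0])⟩
  have hC1 : (Function.support fun x : V =>
      C (cc α β (U + x.1.1 - x.1.2)) * C (cc α β (T - U + x.2.1 - x.2.2)) *
        (Y f x.1.2 h * (Sh U (Y f x.1.1 (Y f x.2.2 g)) * Sh T (Y f x.2.1 p)))).Finite := by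
    refine supp_fin4 ((YYS_finite f g).image Prod.fst) (YS_finite f h)
      (YS_finite f p) (YS_finite f g) fun x hx => ?_
    have hyy : Y f x.1.1 (Y f x.2.2 g) ≠ 0 := fun h0 => hx (by simp [h0])
    exact ⟨⟨(x.1.1, x.2.2), hyy, rfl⟩, fun h0 => hx (by simp [h0]),
      fun h0 => hx (by simp [h0]), fun h0 => hx (by simp [h0, Y_zero])⟩
  have hC2 : (Function.support fun x : V =>
      C (cc α β (U + x.1.1 - x.1.2)) * C (cc α β (T - U + x.2.1 - x.2.2)) *
        (Y f x.1.2 h * (Sh U (Y f x.2.2 g) * Sh T (Y f (x.1.1 - T + U) (Y f x.2.1 p))))).Finite := by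
    refine supp_fin4 (((YYS_finite f p).image Prod.fst).image (fun a => a + T - U))
      (YS_finite f h) (YS_finite f p) (YS_finite f g) fun x hx => ?_
    have hyy : Y f (x.1.1 - T + U) (Y f x.2.1 p) ≠ 0 := fun h0 => hx (by simp [h0])
    refine ⟨⟨x.1.1 - T + U, ⟨(x.1.1 - T + U, x.2.1), hyy, rfl⟩, ?_⟩,
      fun h0 => hx (by simp [h0]),
      fun h0 => hx (by simp [h0, Y_zero]), fun h0 => hx (by simp [h0])⟩
    show x.1.1 - T + U + T - U = x.1.1
    abel
  rw [expandL f α β T U p g h, expandL f α β U T g p h, expandR f α β T U p g h,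
    finsum_add_distrib hA1 hA2, finsum_add_distrib hB1 hB2, finsum_add_distrib hC1 hC2,
    sumA1_eq_sumB1 f hfdep α β T U p g h, sumA2_eq_sumC1 f hfdep α β T U p g h,
    sumC2_eq_neg_sumB2 f hfdep α β T U p g h]
  abel


/-- for `f = f(u)` and constants `α, β ∈ ℂ`, the operator
`P = f(u)(α S₁ + β S₂ − β S₂^{−1} − α S₁^{−1})∘f(u)` is Hamiltonian: its master-formula
λ-bracket is skewsymmetric and satisfies the PVA-Jacobi identity for all triples. -/
theorem first_order_general_is_hamiltonian (f : A 1 2)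
    (hfdep : ∀ N : Fin 2 → ℤ, N ≠ 0 → pderiv ((0 : Fin 1), N) f = 0)
    (α β : ℂ)
    (P : Fin 1 → Fin 1 → (Fin 2 → ℤ) → A 1 2)
    (hP : P = fun _ _ T =>
      if T = v 1 0 then C α * (f * Sh (v 1 0) f)
      else if T = v 0 1 then C β * (f * Sh (v 0 1) f)
      else if T = v (-1) 0 then -(C α * (f * Sh (v (-1) 0) f))
      else if T = v 0 (-1) then -(C β * (f * Sh (v 0 (-1)) f))
      else 0) :
    (∀ (p q : A 1 2) (T : Fin 2 → ℤ), B P (-T) q p = - Sh (-T) (B P T p q)) ∧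
    (∀ p q r : A 1 2, Jacobi P p q r) := by
  constructor
  · intro p q T
    rw [B_eq_s16 f α β P hP (-T) q p, B_eq_s16 f α β P hP T p q]
    exact bb_skew f α β T p q
  · intro p g r
    intro T U
    rw [B_eq_s16 f α β P hP U g r, B_eq_s16 f α β P hP T p r, B_eq_s16 f α β P hP (T - U) p g,
      B_eq_s16 f α β P hP T p (bb f α β U g r), B_eq_s16 f α β P hP U g (bb f α β T p r),
      B_eq_s16 f α β P hP U (bb f α β (T - U) p g) r]
    exact bb_jacobi f hfdep α β T U p g r

end MPVA
end
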